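/- arXiv:1905.13507 — 9 statements merged into one kernel-verified Lean document; each statement's English description precedes it below -/
import Mathlib

section
/- Let X be a complete metric space, n ∈ ℕ, and f_1,...,f_n : X → X contractions (Lipschitz constant < 1). Then there exists a unique nonempty compact set A ⊆ X such that A = ⋃_{i=1}^n f_i(A). -/
open scoped NNReal ENNReal

open EMetric Set Metric

lemma lip_infEdist_image_le {X : Type*} [MetricSpace X] {c : ℝ≥0} {f : X → X}
    (hf : LipschitzWith c f) (a : X) (t : Set X) (ht : t.Nonempty) :
    infEdist (f a) (f '' t) ≤ (c : ℝ≥0∞) * infEdist a t := by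
  have : Nonempty t := ht.to_subtype
  rw [infEdist, infEDist, iInf_image]
  have : (c : ℝ≥0∞) * (⨅ b ∈ t, edist a b) = ⨅ b ∈ t, (c : ℝ≥0∞) * edist a b := by
    rw [iInf_subtype', iInf_subtype', ENNReal.mul_iInf' (by simp) (fun _ => ‹Nonempty t›)]
  rw [infEDist, this]
  exact iInf₂_mono fun b _ => hf a b

/-- Hutchinson–Barnsley: an IFS of contractions on a complete metric space has a
unique nonempty compact attractor. -/
theorem ifs_attractor (X : Type*) [MetricSpace X] [CompleteSpace X] [Nonempty X]
    (n : ℕ) (hn : 0 < n) (f : Fin n → X → X)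
    (hf : ∀ i, ∃ c : ℝ≥0, c < 1 ∧ LipschitzWith c (f i)) :
    ∃! A : Set X, A.Nonempty ∧ IsCompact A ∧ A = ⋃ i, f i '' A := by
  haveI : NeZero n := ⟨hn.ne'⟩
  choose c hc hlip using hf
  set K : ℝ≥0 := Finset.univ.sup c with hK
  have hK1 : K < 1 := Finset.sup_lt_iff (by norm_num) |>.2 fun i _ => hc i
  -- Hutchinson operator
  have hcont : ∀ i, Continuous (f i) := fun i => (hlip i).continuous
  set F : TopologicalSpace.NonemptyCompacts X → TopologicalSpace.NonemptyCompacts X :=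
    fun A => ⟨⟨⋃ i, f i '' A, isCompact_iUnion fun i => A.isCompact.image (hcont i)⟩,
      by
        obtain ⟨x, hx⟩ := A.nonempty
        exact ⟨f 0 x, mem_iUnion.2 ⟨0, ⟨x, hx, rfl⟩⟩⟩⟩ with hF
  have edist_eq : ∀ A B : TopologicalSpace.NonemptyCompacts X,
      edist A B = hausdorffEdist (A : Set X) (B : Set X) := fun _ _ => rfl
  have hFlip : LipschitzWith K F := by
    intro A B
    rw [edist_eq, edist_eq]
    have key : ∀ A B : TopologicalSpace.NonemptyCompacts X, ∀ x ∈ (F A : Set X),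
        infEdist x (F B : Set X) ≤ (K : ℝ≥0∞) * hausdorffEdist (A : Set X) (B : Set X) := by
      intro A B x hx
      obtain ⟨i, hi⟩ := mem_iUnion.1 hx
      obtain ⟨a, ha, rfl⟩ := hi
      calc infEdist (f i a) (F B : Set X) ≤ infEdist (f i a) (f i '' B) :=
            infEdist_anti (subset_iUnion (fun j => f j '' (B : Set X)) i)
        _ ≤ (c i : ℝ≥0∞) * infEdist a (B : Set X) :=
            lip_infEdist_image_le (hlip i) a _ B.nonempty
        _ ≤ (K : ℝ≥0∞) * hausdorffEdist (A : Set X) (B : Set X) := by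
            gcongr
            · exact_mod_cast Finset.le_sup (Finset.mem_univ i)
            · exact infEdist_le_hausdorffEdist_of_mem ha
    refine hausdorffEdist_le_of_infEdist (key A B) fun x hx => ?_
    rw [hausdorffEdist, hausdorffEDist_comm]
    exact key B A x hx
  haveI : Nonempty (TopologicalSpace.NonemptyCompacts X) :=
    ⟨⟨⟨{Classical.arbitrary X}, isCompact_singleton⟩, Set.singleton_nonempty _⟩⟩
  have hFcontr : ContractingWith K F := ⟨hK1, hFlip⟩
  set A := hFcontr.fixedPoint F with hA
  have hAfix : F A = A := hFcontr.fixedPoint_isFixedPt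
  refine ⟨(A : Set X), ⟨A.nonempty, A.isCompact, ?_⟩, ?_⟩
  · conv_lhs => rw [← hAfix]
    rfl
  · rintro B ⟨hBne, hBc, hBeq⟩
    set B' : TopologicalSpace.NonemptyCompacts X := ⟨⟨B, hBc⟩, hBne⟩ with hB'
    have : F B' = B' := by
      apply TopologicalSpace.NonemptyCompacts.ext
      exact hBeq.symm
    have : B' = A := hFcontr.fixedPoint_unique this
    rw [← this]
    rfl
end

section
/- Let X be a complete metric space, m ∈ ℕ, and g_1,...,g_n : X^m → X contractions, where X^m carries the maximum metric. Then there exists a unique nonempty compact set A ⊆ X such that A = ⋃_{i=1}^n g_i(A × ... × A) (m-fold product). -/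
open scoped NNReal ENNReal
open Set EMetric TopologicalSpace Function

/-- GIFS of order `m`: contractions `g_i : X^m → X` (max metric) on a complete metric
space admit a unique nonempty compact attractor `A = ⋃ g_i (A × ... × A)`. -/
theorem gifs_attractor (X : Type*) [MetricSpace X] [CompleteSpace X] [Nonempty X]
    (m n : ℕ) (hm : 0 < m) (hn : 0 < n) (g : Fin n → (Fin m → X) → X)
    (hg : ∀ i, ∃ c : ℝ≥0, c < 1 ∧ LipschitzWith c (g i)) :
    ∃! A : Set X, A.Nonempty ∧ IsCompact A ∧
      A = ⋃ i, g i '' {p : Fin m → X | ∀ j, p j ∈ A} := by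
  haveI : Nonempty (Fin n) := ⟨⟨0, hn⟩⟩
  choose c hc1 hcL using hg
  set K : ℝ≥0 := Finset.univ.sup c with hK
  have hK1 : K < 1 := Finset.sup_lt_iff (by norm_num : (⊥ : ℝ≥0) < 1) |>.2 fun i _ => hc1 i
  -- the m-fold product set
  have hPeq : ∀ A : Set X, {p : Fin m → X | ∀ j, p j ∈ A} = Set.pi Set.univ (fun _ => A) := by
    intro A; ext p; simp [Set.mem_pi]
  have hPcomp : ∀ A : NonemptyCompacts X,
      IsCompact {p : Fin m → X | ∀ j, p j ∈ (A : Set X)} := by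
    intro A; rw [hPeq]; exact isCompact_univ_pi fun _ => A.isCompact
  -- the Hutchinson operator
  let F : NonemptyCompacts X → NonemptyCompacts X := fun A =>
    ⟨⟨⋃ i, g i '' {p : Fin m → X | ∀ j, p j ∈ (A : Set X)},
      isCompact_iUnion fun i => ((hPcomp A).image (hcL i).continuous)⟩, by
        obtain ⟨x, hx⟩ := A.nonempty
        exact ⟨g (Classical.arbitrary _) (fun _ => x),
          Set.mem_iUnion.2 ⟨_, Set.mem_image_of_mem _ (fun j => hx)⟩⟩⟩
  have hFcoe : ∀ A : NonemptyCompacts X,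
      (F A : Set X) = ⋃ i, g i '' {p : Fin m → X | ∀ j, p j ∈ (A : Set X)} := fun _ => rfl
  -- key Hausdorff estimate
  have key : ∀ A B : NonemptyCompacts X, ∀ x ∈ (F A : Set X), ∃ y ∈ (F B : Set X),
      edist x y ≤ (K : ℝ≥0∞) * hausdorffEdist (A : Set X) B := by
    intro A B x hx
    rw [hFcoe, Set.mem_iUnion] at hx
    obtain ⟨i, p, hp, rfl⟩ := hx
    have hq : ∀ j, ∃ y ∈ (B : Set X), infEdist (p j) B = edist (p j) y := fun j =>
      B.isCompact.exists_infEdist_eq_edist B.nonempty _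
    choose q hqB hqd using hq
    have hpq : edist p q ≤ hausdorffEdist (A : Set X) B := by
      rw [edist_pi_le_iff]
      intro j
      rw [← hqd j]
      exact infEdist_le_hausdorffEdist_of_mem (hp j)
    refine ⟨g i q, ?_, ?_⟩
    · rw [hFcoe, Set.mem_iUnion]
      exact ⟨i, Set.mem_image_of_mem _ fun j => hqB j⟩
    · calc edist (g i p) (g i q) ≤ (c i : ℝ≥0∞) * edist p q := (hcL i) p q
        _ ≤ (K : ℝ≥0∞) * hausdorffEdist (A : Set X) B :=
          mul_le_mul' (by exact_mod_cast Finset.le_sup (Finset.mem_univ i)) hpq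
  have hF : ContractingWith K F := by
    refine ⟨hK1, fun A B => ?_⟩
    show hausdorffEdist (F A : Set X) (F B : Set X) ≤ (K : ℝ≥0∞) * hausdorffEdist (A : Set X) B
    refine hausdorffEdist_le_of_mem_edist (key A B) ?_
    intro x hx
    obtain ⟨y, hy, hxy⟩ := key B A x hx
    exact ⟨y, hy, by unfold hausdorffEdist at hxy ⊢; rwa [hausdorffEdist_comm]⟩
  haveI : Nonempty (NonemptyCompacts X) :=
    ⟨⟨⟨{Classical.arbitrary X}, isCompact_singleton⟩, Set.singleton_nonempty _⟩⟩
  set A0 := ContractingWith.fixedPoint F hF with hA0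
  have hfix : F A0 = A0 := hF.fixedPoint_isFixedPt
  refine ⟨(A0 : Set X), ⟨A0.nonempty, A0.isCompact, ?_⟩, ?_⟩
  · rw [← hFcoe, hfix]
  · rintro A' ⟨hne, hcpt, heq⟩
    have : F ⟨⟨A', hcpt⟩, hne⟩ = ⟨⟨A', hcpt⟩, hne⟩ :=
      NonemptyCompacts.ext (by rw [hFcoe]; exact heq.symm)
    have h2 : (⟨⟨A', hcpt⟩, hne⟩ : NonemptyCompacts X) = A0 := hF.fixedPoint_unique this
    exact congrArg (fun s : NonemptyCompacts X => (s : Set X)) h2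
end

section
/- Let X be a complete metric space and f_1,...,f_n : ℓ_∞(X) → X contractions (with respect to the supremum metric) each satisfying condition (C1). Then there exists a unique nonempty compact set A ⊆ X such that A = ⋃_{i=1}^n closure(f_i(A × A × ...)). -/
open scoped NNReal ENNReal

/-- Condition (C1): for every bounded sequence of nonempty compact sets `K_k`,
the closure of the image of the product `∏ K_k` under `f` is compact. -/
def SatisfiesC1 {X : Type*} [MetricSpace X]
    (f : BoundedContinuousFunction ℕ X → X) : Prop :=
  ∀ K : ℕ → Set X, (∀ k, (K k).Nonempty ∧ IsCompact (K k)) →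
    Bornology.IsBounded (⋃ k, K k) →
    IsCompact (closure (f '' {x | ∀ k, x k ∈ K k}))

open Metric EMetric TopologicalSpace Set

/-- Secelean's theorem: a GIFS of order infinity (contractions `ℓ_∞(X) → X`
satisfying (C1)) on a complete metric space has a unique nonempty compact
attractor `A = ⋃ closure (f_i (A × A × ...))`. -/
theorem gifs_infty_attractor (X : Type*) [MetricSpace X] [CompleteSpace X] [Nonempty X]
    (n : ℕ) (hn : 0 < n) (f : Fin n → BoundedContinuousFunction ℕ X → X)
    (hlip : ∀ i, ∃ c : ℝ≥0, c < 1 ∧ LipschitzWith c (f i))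
    (hC1 : ∀ i, SatisfiesC1 (f i)) :
    ∃! A : Set X, A.Nonempty ∧ IsCompact A ∧
      A = ⋃ i, closure (f i '' {x | ∀ k, x k ∈ A}) := by
  classical
  haveI : NeZero n := ⟨hn.ne'⟩
  choose c hc1 hclip using hlip
  set L : ℝ≥0 := Finset.univ.sup c with hLdef
  have hL1 : L < 1 := by
    rw [hLdef, Finset.sup_lt_iff (by norm_num : (⊥ : ℝ≥0) < 1)]
    exact fun i _ => hc1 i
  have hcL : ∀ i, c i ≤ L := fun i => Finset.le_sup (Finset.mem_univ i)
  -- the set operator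
  set body : Set X → Set X :=
    fun A => ⋃ i, closure (f i '' {x | ∀ k, x k ∈ A}) with hbody
  have hcomp : ∀ A : NonemptyCompacts X, IsCompact (body A) := by
    intro A
    refine isCompact_iUnion fun i => ?_
    exact hC1 i (fun _ => A) (fun k => ⟨A.nonempty, A.isCompact⟩)
      (by rw [Set.iUnion_const]; exact A.isCompact.isBounded)
  have hne : ∀ A : NonemptyCompacts X, (body A).Nonempty := by
    intro A
    obtain ⟨a, ha⟩ := A.nonempty
    exact ⟨f 0 (BoundedContinuousFunction.const ℕ a),
      Set.mem_iUnion.2 ⟨0, subset_closure ⟨BoundedContinuousFunction.const ℕ a,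
        fun k => ha, rfl⟩⟩⟩
  set F : NonemptyCompacts X → NonemptyCompacts X :=
    fun A => ⟨⟨body A, hcomp A⟩, hne A⟩ with hF
  -- the key estimate
  have hhalf : ∀ A B : NonemptyCompacts X, ∀ x ∈ ⋃ i, f i '' {y | ∀ k, y k ∈ (A : Set X)},
      ∃ y ∈ ⋃ i, f i '' {y | ∀ k, y k ∈ (B : Set X)},
        edist x y ≤ (L : ℝ≥0∞) * hausdorffEdist (A : Set X) (B : Set X) := by
    intro A B x hx
    obtain ⟨i, σ, hσ, rfl⟩ := Set.mem_iUnion.1 hx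
    set r := hausdorffEdist (A : Set X) (B : Set X) with hr
    have hrtop : r ≠ ⊤ :=
      hausdorffEdist_ne_top_of_nonempty_of_bounded A.nonempty B.nonempty
        A.isCompact.isBounded B.isCompact.isBounded
    have hτ' : ∀ k, ∃ y ∈ (B : Set X), infEdist (σ k) (B : Set X) = edist (σ k) y :=
      fun k => B.isCompact.exists_infEdist_eq_edist B.nonempty (σ k)
    choose τ hτB hτd using hτ'
    have hτr : ∀ k, edist (σ k) (τ k) ≤ r := fun k => by
      rw [← hτd k]; exact infEdist_le_hausdorffEdist_of_mem (hσ k)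
    obtain ⟨C, hC⟩ := Metric.isBounded_iff.1 B.isCompact.isBounded
    set τ' : BoundedContinuousFunction ℕ X :=
      ⟨⟨τ, continuous_of_discreteTopology⟩, C, fun j k => hC (hτB j) (hτB k)⟩ with hτ'def
    have hστ : edist σ τ' ≤ r := by
      rw [edist_dist]
      have hd : dist σ τ' ≤ r.toReal := by
        refine (BoundedContinuousFunction.dist_le ENNReal.toReal_nonneg).2 fun k => ?_
        rw [dist_edist]
        exact ENNReal.toReal_mono hrtop (hτr k)
      calc ENNReal.ofReal (dist σ τ') ≤ ENNReal.ofReal r.toReal :=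
            ENNReal.ofReal_le_ofReal hd
        _ = r := ENNReal.ofReal_toReal hrtop
    refine ⟨f i τ', Set.mem_iUnion.2 ⟨i, τ', fun k => hτB k, rfl⟩, ?_⟩
    calc edist (f i σ) (f i τ') ≤ (c i : ℝ≥0∞) * edist σ τ' := hclip i σ τ'
      _ ≤ (L : ℝ≥0∞) * r := by
          exact mul_le_mul' (ENNReal.coe_le_coe.2 (hcL i)) hστ
  have hlipF : LipschitzWith L F := by
    intro A B
    show hausdorffEdist (body A) (body B) ≤ (L : ℝ≥0∞) * hausdorffEdist (A : Set X) (B : Set X)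
    have hcl : ∀ D : Set X, body D =
        closure (⋃ i, f i '' {x | ∀ k, x k ∈ D}) := fun D =>
      (closure_iUnion_of_finite _).symm
    rw [hcl, hcl, hausdorffEdist, hausdorffEdist_closure]
    refine hausdorffEdist_le_of_mem_edist (hhalf A B) ?_
    intro x hx
    obtain ⟨y, hy, hxy⟩ := hhalf B A x hx
    exact ⟨y, hy, by rw [hausdorffEdist_comm (s := (A : Set X))]; exact hxy⟩
  have hcontr : ContractingWith L F := ⟨hL1, hlipF⟩
  haveI : Nonempty (NonemptyCompacts X) :=
    ⟨⟨⟨{Classical.arbitrary X}, isCompact_singleton⟩, Set.singleton_nonempty _⟩⟩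
  set A₀ := hcontr.fixedPoint F with hA₀
  have hfix : F A₀ = A₀ := hcontr.fixedPoint_isFixedPt
  refine ⟨A₀, ⟨A₀.nonempty, A₀.isCompact, ?_⟩, ?_⟩
  · conv_lhs => rw [← hfix]
    rfl
  · rintro B ⟨hBne, hBc, hBeq⟩
    have hBfix : F ⟨⟨B, hBc⟩, hBne⟩ = ⟨⟨B, hBc⟩, hBne⟩ :=
      TopologicalSpace.NonemptyCompacts.ext hBeq.symm
    have := hcontr.fixedPoint_unique' hBfix hfix
    exact congrArg (fun s : NonemptyCompacts X => (s : Set X)) this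
end

section
/- Let X be a metric space and h a gauge function. Suppose K ⊆ X is a nonempty compact set with 0 < H^h(K), where H^h is the h-Hausdorff measure, and suppose that for every weak contraction f : K → X one has H^h(K ∩ f(K)) = 0. Then K is not the attractor of any weak IFS, i.e., there is no finite family f_1,...,f_n of weak contractions f_i : X → X with K = ⋃_{i=1}^n f_i(K). -/
open MeasureTheory

/-- If `K` is nonempty compact with positive `h`-Hausdorff measure (for a gauge
function `h`), and every weak contraction `f` on `K` satisfies
`H^h(K ∩ f(K)) = 0`, then `K` is not the attractor of any weak IFS. -/
theorem not_attractor_of_weak_IFS (X : Type*) [MetricSpace X] (h : ℝ → ℝ)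
    (hmono : MonotoneOn h (Set.Ici 0))
    (hrc : ∀ x ≥ (0 : ℝ), ContinuousWithinAt h (Set.Ici x) x)
    (h0 : ∀ x ≥ (0 : ℝ), (h x = 0 ↔ x = 0))
    (K : Set X) (hK : IsCompact K) (hKne : K.Nonempty)
    (μ : OuterMeasure X)
    (hμ : μ = MeasureTheory.OuterMeasure.mkMetric fun d => ENNReal.ofReal (h d.toReal))
    (hpos : 0 < μ K)
    (hsmall : ∀ f : X → X, (∀ x ∈ K, ∀ y ∈ K, x ≠ y → dist (f x) (f y) < dist x y) →
      μ (K ∩ f '' K) = 0) :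
    ¬ ∃ (n : ℕ) (f : Fin n → X → X),
        (∀ i, ∀ x y : X, x ≠ y → dist (f i x) (f i y) < dist x y) ∧
        K = ⋃ i, f i '' K := by
  rintro ⟨n, f, hcon, hunion⟩
  have hsub : K ⊆ ⋃ i, K ∩ f i '' K := by
    intro x hx
    have hx' : x ∈ ⋃ i, f i '' K := hunion ▸ hx
    rcases Set.mem_iUnion.mp hx' with ⟨i, hi⟩
    exact Set.mem_iUnion.mpr ⟨i, hx, hi⟩
  have hzero : μ K = 0 := by
    have h1 : μ K ≤ ∑ i, μ (K ∩ f i '' K) :=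
      le_trans (measure_mono hsub) (measure_iUnion_fintype_le _ _)
    have h2 : ∀ i, μ (K ∩ f i '' K) = 0 := fun i =>
      hsmall (f i) (fun x _ y _ hxy => hcon i x y hxy)
    simpa [h2] using h1
  exact hpos.ne' hzero
end

section
/- Let X be a Polish metric space, q ≥ 2, K ⊆ X a q-balanced set, and P ⊆ X a finite nonempty set disjoint from K. Then R := K ∪ P is a generalized fractal: there exist contractions g_1,...,g_m : ℓ_∞(R) → R with R = ⋃_{j=1}^m g_j(R × R × ...), and for each r ∈ (0,1) these can be chosen with Lipschitz constants ≤ r. -/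
/-- Distance between two subsets of a metric space:
`dist(A,B) = inf { d(a,b) : a ∈ A, b ∈ B }`. -/
noncomputable def SetDist {X : Type*} [MetricSpace X] (A B : Set X) : ℝ :=
  sInf (Set.image2 dist A B)

/-- `IsQBalancedSystem q K a b C Φ` says that the compact set `K` is `q`-balanced,
witnessed by the sequence `(a_n)` of branching numbers, the sequence `(b_n)` of
diameter bounds, the nested closed sets `C n σ` (indexed by tuples
`σ : Fin (n+1) → ℕ` with `σ i < a i`, i.e. tuples `(i_1, ..., i_{n+1})` with
`i_j ∈ {1, ..., a_j}` written with 0-based digits), and the indexing function `Φ`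
(defined on odd naturals, surjective onto valid tuples, with `Φ n` of length `≤ n`).
The conditions are (i)–(v) of Balka–Máthé (with the factor `q` in (iv)). -/
def IsQBalancedSystem {X : Type*} [MetricSpace X] (q : ℝ) (K : Set X)
    (a : ℕ → ℕ) (b : ℕ → ℝ)
    (C : (n : ℕ) → (Fin (n + 1) → ℕ) → Set X)
    (Φ : ℕ → Σ n : ℕ, Fin (n + 1) → ℕ) : Prop :=
  IsCompact K ∧
  -- the representation of K as the intersection of the level sets
  K = (⋂ n : ℕ, ⋃ σ ∈ {σ : Fin (n + 1) → ℕ | ∀ i, σ i < a (i : ℕ)}, C n σ) ∧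
  -- (i) growth of the branching numbers
  2 ≤ a 0 ∧ (∀ n, 1 ≤ n → n * ∏ i ∈ Finset.range n, a i ≤ a n) ∧
  -- (ii) nestedness
  (∀ n (σ : Fin (n + 2) → ℕ), (∀ i, σ i < a (i : ℕ)) →
      C (n + 1) σ ⊆ C n fun i => σ i.castSucc) ∧
  -- the level sets are nonempty and closed, and (iii) diameter bounds
  (∀ n (σ : Fin (n + 1) → ℕ), (∀ i, σ i < a (i : ℕ)) →
      (C n σ).Nonempty ∧ IsClosed (C n σ) ∧ Metric.diam (C n σ) ≤ b n) ∧
  (∀ n, 0 ≤ b n) ∧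
  -- (iv) separation of distinct level sets, with factor q
  (∀ n (σ τ : Fin (n + 1) → ℕ), (∀ i, σ i < a (i : ℕ)) → (∀ i, τ i < a (i : ℕ)) →
      σ ≠ τ → q * b n < SetDist (C n σ) (C n τ)) ∧
  -- Φ is an indexing function according to (a_n)
  (∀ n, n % 2 = 1 → (Φ n).1 + 1 ≤ n ∧ ∀ i, (Φ n).2 i < a (i : ℕ)) ∧
  (∀ m (τ : Fin (m + 1) → ℕ), (∀ i, τ i < a (i : ℕ)) →
      ∃ n, n % 2 = 1 ∧ Φ n = ⟨m, τ⟩) ∧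
  -- (v) the technical separation condition
  (∀ m, (m + 1) % 2 = 1 → ∀ σ τ : Fin (m + 1) → ℕ,
      (∀ i, σ i < a (i : ℕ)) → (∀ i, τ i < a (i : ℕ)) →
      C m σ ⊆ C (Φ (m + 1)).1 (Φ (m + 1)).2 →
      ¬ C m τ ⊆ C (Φ (m + 1)).1 (Φ (m + 1)).2 →
      ∀ s t : ℕ, s < a (m + 1) → t < a (m + 1) → s ≠ t →
        Metric.diam (⋃ u ∈ Finset.range (a (m + 1)), C (m + 1) (Fin.snoc τ u)) <
          SetDist (C (m + 1) (Fin.snoc σ s)) (C (m + 1) (Fin.snoc σ t)))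

/-- In a Polish space, the union `R = K ∪ P` of a `q`-balanced set `K` and a finite
nonempty set `P` disjoint from `K` is a generalized fractal: for every `r ∈ (0,1)`
there are finitely many maps `g_j : ℓ_∞(R) → R` (R-valued sequences with the
supremum metric), Lipschitz with constant `≤ r`, with `R = ⋃ g_j (R × R × ...)`. -/
theorem union_qbalanced_finite_generalized_fractal (X : Type*) [MetricSpace X]
    [CompleteSpace X] [TopologicalSpace.SeparableSpace X]
    (q : ℝ) (hq : 2 ≤ q) (K : Set X)
    (hbal : ∃ a b C Φ, IsQBalancedSystem q K a b C Φ)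
    (P : Set X) (hPfin : P.Finite) (hPne : P.Nonempty) (hdisj : Disjoint K P) :
    ∀ r ∈ Set.Ioo (0 : ℝ) 1, ∃ (m : ℕ) (g : Fin m → (ℕ → X) → X),
      (∀ j (x : ℕ → X), (∀ k, x k ∈ K ∪ P) → g j x ∈ K ∪ P) ∧
      (∀ j (x y : ℕ → X), (∀ k, x k ∈ K ∪ P) → (∀ k, y k ∈ K ∪ P) →
        dist (g j x) (g j y) ≤ r * ⨆ k, dist (x k) (y k)) ∧
      K ∪ P = ⋃ j, g j '' {x : ℕ → X | ∀ k, x k ∈ K ∪ P} := by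
  classical
  obtain ⟨a, b, C, Φ, hsys⟩ := hbal
  have hKcomp : IsCompact K := hsys.1
  rintro r ⟨hr0, hr1⟩
  obtain ⟨p, hpP⟩ := hPne
  have hpR : p ∈ K ∪ P := Or.inr hpP
  have hRcomp : IsCompact (K ∪ P) := hKcomp.union hPfin.isCompact
  obtain ⟨Cb, hCb⟩ := Metric.isBounded_iff.mp hRcomp.isBounded
  have hbdd : ∀ x y : ℕ → X, (∀ k, x k ∈ K ∪ P) → (∀ k, y k ∈ K ∪ P) →
      BddAbove (Set.range fun k => dist (x k) (y k)) := by
    intro x y hx hy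
    exact ⟨Cb, by rintro s ⟨k, rfl⟩; exact hCb (hx k) (hy k)⟩
  have hsup0 : ∀ x y : ℕ → X, (0:ℝ) ≤ ⨆ k, dist (x k) (y k) :=
    fun x y => Real.iSup_nonneg fun k => dist_nonneg
  have hpnotK : p ∉ K := fun h => Set.disjoint_left.mp hdisj h hpP
  set S : Set X := K ∪ (P \ {p}) with hSdef
  have hpS : p ∉ S := by
    rintro (h | h)
    · exact hpnotK h
    · exact h.2 rfl
  have hSsubR : S ⊆ K ∪ P := by
    rintro w (h | h)
    · exact Or.inl h
    · exact Or.inr h.1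
  have hmemS : ∀ w ∈ K ∪ P, w ≠ p → w ∈ S := by
    rintro w (h | h) hne
    · exact Or.inl h
    · exact Or.inr ⟨h, hne⟩
  by_cases hS : S.Nonempty
  · -- main case: there is a point of K ∪ P different from p
    have hScomp : IsCompact S := hKcomp.union (hPfin.subset Set.diff_subset).isCompact
    set ρ := Metric.infDist p S with hρdef
    obtain ⟨ynear, hynearS, hρeq⟩ := hScomp.exists_infDist_eq_dist hS p
    have hynear_ne : ynear ≠ p := fun h => hpS (h ▸ hynearS)
    have hρpos : 0 < ρ := by
      rw [hρdef, hρeq]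
      exact dist_pos.mpr (Ne.symm hynear_ne)
    have hρle : ∀ w ∈ S, ρ ≤ dist p w := fun w hw => Metric.infDist_le_dist_of_mem hw
    set ε := r * ρ / 3 with hεdef
    have hεpos : 0 < ε := div_pos (mul_pos hr0 hρpos) (by norm_num)
    obtain ⟨t, htsub, htfin, hcov⟩ := hRcomp.finite_cover_balls hεpos
    have hnX : Nonempty X := ⟨p⟩
    -- an injection of X into Set (ℕ × ℚ), via distances to a dense sequence
    obtain ⟨ι, hι⟩ : ∃ ι : X → Set (ℕ × ℚ), Function.Injective ι := by
      set u := TopologicalSpace.denseSeq X with hu_def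
      have hu : DenseRange u := TopologicalSpace.denseRange_denseSeq X
      refine ⟨fun w => {vq : ℕ × ℚ | (vq.2 : ℝ) < dist w (u vq.1)}, ?_⟩
      intro w₁ w₂ h
      have hiff : ∀ (n : ℕ) (qq : ℚ), ((qq : ℝ) < dist w₁ (u n)) ↔ ((qq : ℝ) < dist w₂ (u n)) := by
        intro n qq
        have := Set.ext_iff.mp h (n, qq)
        simpa using this
      have hdists : ∀ n, dist w₁ (u n) = dist w₂ (u n) := by
        intro n
        by_contra hne
        rcases lt_or_gt_of_ne hne with hlt | hlt
        · obtain ⟨qq, hq1, hq2⟩ := exists_rat_btwn hlt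
          exact absurd ((hiff n qq).mpr hq2) (not_lt.mpr hq1.le)
        · obtain ⟨qq, hq1, hq2⟩ := exists_rat_btwn hlt
          exact absurd ((hiff n qq).mp hq2) (not_lt.mpr hq1.le)
      have hzero : dist w₁ w₂ = 0 := by
        by_contra hne
        have hpos : 0 < dist w₁ w₂ := dist_nonneg.lt_of_ne (Ne.symm hne)
        obtain ⟨n, hn⟩ := Metric.denseRange_iff.mp hu w₁ (dist w₁ w₂ / 3) (by linarith)
        have htri : dist w₁ w₂ ≤ dist w₁ (u n) + dist w₂ (u n) := dist_triangle_right _ _ _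
        rw [← hdists n] at htri
        linarith
      exact eq_of_dist_eq_zero hzero
    -- the decoder for each center c
    have hTc : ∀ c ∈ t, c ∈ (K ∪ P) ∩ Metric.ball c ε :=
      fun c hc => ⟨htsub hc, Metric.mem_ball_self hεpos⟩
    obtain ⟨dec, hdecmem, hdecsurj⟩ :
        ∃ dec : X → Set (ℕ × ℚ) → X,
          (∀ c ∈ t, ∀ A, dec c A ∈ (K ∪ P) ∩ Metric.ball c ε) ∧
          (∀ c A z, z ∈ (K ∪ P) ∩ Metric.ball c ε → ι z = A → dec c A = z) := by
      refine ⟨fun c A =>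
        if h : ∃ z, z ∈ (K ∪ P) ∩ Metric.ball c ε ∧ ι z = A then h.choose else c, ?_, ?_⟩
      · intro c hc A
        by_cases h : ∃ z, z ∈ (K ∪ P) ∩ Metric.ball c ε ∧ ι z = A
        · simp only [dif_pos h]
          exact h.choose_spec.1
        · simp only [dif_neg h]
          exact hTc c hc
      · intro c A z hz hA
        have h : ∃ z', z' ∈ (K ∪ P) ∩ Metric.ball c ε ∧ ι z' = A := ⟨z, hz, hA⟩
        simp only [dif_pos h]
        exact hι (h.choose_spec.2.trans hA.symm)
    -- the pattern code of a sequence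
    obtain ⟨code, hcode_stab, hcode_real⟩ :
        ∃ code : (ℕ → X) → Set (ℕ × ℚ),
          (∀ x y : ℕ → X, code x ≠ code y →
            ∃ k, (x k = p ∧ y k ≠ p) ∨ (x k ≠ p ∧ y k = p)) ∧
          (∀ A : Set (ℕ × ℚ), ∃ x : ℕ → X, (∀ k, x k = p ∨ x k = ynear) ∧ code x = A) := by
      set η : ℕ × ℚ ≃ ℕ := Denumerable.eqv (ℕ × ℚ) with hη
      refine ⟨fun x => {v : ℕ × ℚ | x (η v) = p}, ?_, ?_⟩
      · intro x y hne
        have hex : ∃ v : ℕ × ℚ, ¬ (x (η v) = p ↔ y (η v) = p) := by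
          by_contra hforall
          simp only [not_exists, not_not] at hforall
          exact hne (Set.ext fun v => hforall v)
        obtain ⟨v, hv⟩ := hex
        by_cases hx : x (η v) = p
        · exact ⟨η v, Or.inl ⟨hx, fun hy => hv (iff_of_true hx hy)⟩⟩
        · have hy : y (η v) = p := by
            by_contra hy
            exact hv (iff_of_false hx hy)
          exact ⟨η v, Or.inr ⟨hx, hy⟩⟩
      · intro A
        refine ⟨fun k => if η.symm k ∈ A then p else ynear, fun k => by
          by_cases h : η.symm k ∈ A <;> simp [h], ?_⟩
        ext v
        simp only [Set.mem_setOf_eq, Equiv.symm_apply_apply]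
        by_cases h : v ∈ A
        · simp [h]
        · simp [h, hynear_ne]
    -- assemble the maps
    set F := htfin.toFinset with hFdef
    refine ⟨F.card, fun j x => dec ((F.equivFin.symm j : F) : X) (code x), ?_, ?_, ?_⟩
    · intro j x _
      exact (hdecmem _ (htfin.mem_toFinset.mp (F.equivFin.symm j).2) (code x)).1
    · intro j x y hx hy
      have hct : ((F.equivFin.symm j : F) : X) ∈ t :=
        htfin.mem_toFinset.mp (F.equivFin.symm j).2
      have hshow : ∀ x' : ℕ → X,
          (fun (j : Fin F.card) (x'' : ℕ → X) => dec ((F.equivFin.symm j : F) : X) (code x'')) j x'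
            = dec ((F.equivFin.symm j : F) : X) (code x') := fun _ => rfl
      rw [hshow x, hshow y]
      by_cases hcd : code x = code y
      · rw [hcd]
        simpa [dist_self] using mul_nonneg hr0.le (hsup0 x y)
      · obtain ⟨k, hk⟩ := hcode_stab x y hcd
        have hρd : ρ ≤ dist (x k) (y k) := by
          rcases hk with ⟨hxk, hyk⟩ | ⟨hxk, hyk⟩
          · rw [hxk]
            exact hρle _ (hmemS _ (hy k) hyk)
          · rw [hyk, dist_comm]
            exact hρle _ (hmemS _ (hx k) hxk)
        have hρsup : ρ ≤ ⨆ k, dist (x k) (y k) :=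
          le_trans hρd (le_ciSup (hbdd x y hx hy) k)
        have h1 : dist (dec ((F.equivFin.symm j : F) : X) (code x))
            ((F.equivFin.symm j : F) : X) < ε := (hdecmem _ hct (code x)).2
        have h2 : dist (dec ((F.equivFin.symm j : F) : X) (code y))
            ((F.equivFin.symm j : F) : X) < ε := (hdecmem _ hct (code y)).2
        have h3 : dist (dec ((F.equivFin.symm j : F) : X) (code x))
            (dec ((F.equivFin.symm j : F) : X) (code y)) ≤ 2 * ε := by
          have htri := dist_triangle_right (dec ((F.equivFin.symm j : F) : X) (code x))
            (dec ((F.equivFin.symm j : F) : X) (code y)) ((F.equivFin.symm j : F) : X)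
          linarith
        have h4 : 2 * ε ≤ r * ρ := by
          rw [hεdef]
          nlinarith [mul_nonneg hr0.le hρpos.le]
        have h5 : r * ρ ≤ r * ⨆ k, dist (x k) (y k) :=
          mul_le_mul_of_nonneg_left hρsup hr0.le
        linarith
    · apply Set.eq_of_subset_of_subset
      · intro w hw
        have hw2 : w ∈ ⋃ c ∈ t, Metric.ball c ε := hcov hw
        rw [Set.mem_iUnion₂] at hw2
        obtain ⟨c, hct, hcb⟩ := hw2
        obtain ⟨x, hxval, hxcode⟩ := hcode_real (ι w)
        have hxD : ∀ k, x k ∈ K ∪ P := by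
          intro k
          rcases hxval k with h | h
          · rw [h]; exact hpR
          · rw [h]; exact hSsubR hynearS
        rw [Set.mem_iUnion]
        refine ⟨F.equivFin ⟨c, htfin.mem_toFinset.mpr hct⟩, x, hxD, ?_⟩
        simp only [Equiv.symm_apply_apply]
        exact hdecsurj c (code x) w ⟨hw, hcb⟩ hxcode.symm
      · intro w hw
        rw [Set.mem_iUnion] at hw
        obtain ⟨j, x, hxD, rfl⟩ := hw
        exact (hdecmem _ (htfin.mem_toFinset.mp (F.equivFin.symm j).2) (code x)).1
  · -- degenerate case: K ∪ P = {p}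
    have hKP : K ∪ P = {p} := by
      apply Set.eq_of_subset_of_subset
      · intro w hw
        by_contra hne
        rw [Set.mem_singleton_iff] at hne
        exact hS ⟨w, hmemS w hw hne⟩
      · intro w hw
        rw [Set.mem_singleton_iff] at hw
        rw [hw]
        exact hpR
    refine ⟨1, fun _ _ => p, ?_, ?_, ?_⟩
    · intro _ _ _
      exact hpR
    · intro j x y hx hy
      simpa [dist_self] using mul_nonneg hr0.le (hsup0 x y)
    · apply Set.eq_of_subset_of_subset
      · intro w hw
        have hwp : w = p := Set.mem_singleton_iff.mp (hKP ▸ hw)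
        rw [Set.mem_iUnion]
        exact ⟨0, fun _ => p, fun _ => hpR, hwp.symm⟩
      · intro w hw
        rw [Set.mem_iUnion] at hw
        obtain ⟨j, xx, hxx, rfl⟩ := hw
        exact hpR
end

section
/- Let X be a metric space, K ⊆ X a compact set with dist(K,P) = η > 0 for a finite set P, f : ℓ_∞(K) → K a Lipschitz map with constant L, and x ∈ K a fixed point. Define f̃ : ℓ_∞(K ∪ P) → K ∪ P by f̃(x_1,x_2,...) = f(x_1,x_2,...) if all x_k ∈ K, and f̃(x_1,x_2,...) = f(x,x,...) otherwise. Then Lip(f̃) ≤ L · max{1, diam(K)/η}. -/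
/-- Let `K` be nonempty compact, `P` finite and disjoint from `K` with
`η := dist(K,P) > 0`, let `f : ℓ_∞(K) → K` be Lipschitz with constant `L`
(for the supremum metric on `K`-valued sequences), and `x ∈ K`.  The extension
`f̃ : ℓ_∞(K ∪ P) → K ∪ P` defined by `f̃(x₁,x₂,...) = f(x₁,x₂,...)` if all
`x_k ∈ K` and `f̃(x₁,x₂,...) = f(x,x,...)` otherwise, is Lipschitz with constant
`L · max {1, diam(K)/η}`. -/
theorem extension_lipschitz_bound (X : Type*) [MetricSpace X]
    (K P : Set X) (hK : IsCompact K) (hKne : K.Nonempty)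
    (hPfin : P.Finite) (hdisj : Disjoint K P)
    (η : ℝ) (hη : η = SetDist K P) (hηpos : 0 < η)
    (L : ℝ) (hL : 0 ≤ L) (f : (ℕ → X) → X)
    (hmaps : ∀ y : ℕ → X, (∀ k, y k ∈ K) → f y ∈ K)
    (hlip : ∀ y z : ℕ → X, (∀ k, y k ∈ K) → (∀ k, z k ∈ K) →
      dist (f y) (f z) ≤ L * ⨆ k, dist (y k) (z k))
    (x : X) (hx : x ∈ K)
    (g : (ℕ → X) → X)
    (hg : ∀ y : ℕ → X, (∀ k, y k ∈ K) → g y = f y)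
    (hg' : ∀ y : ℕ → X, ¬ (∀ k, y k ∈ K) → g y = f fun _ => x) :
    ∀ y z : ℕ → X, (∀ k, y k ∈ K ∪ P) → (∀ k, z k ∈ K ∪ P) →
      dist (g y) (g z) ≤ L * max 1 (Metric.diam K / η) * ⨆ k, dist (y k) (z k) := by
  have hbound : Bornology.IsBounded (K ∪ P) :=
    hK.isBounded.union hPfin.isBounded
  intro y z hy hz
  set M := max 1 (Metric.diam K / η) with hM
  have hM1 : (1:ℝ) ≤ M := le_max_left _ _
  have hM2 : Metric.diam K / η ≤ M := le_max_right _ _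
  set S := ⨆ k, dist (y k) (z k) with hSdef
  have hSnn : 0 ≤ S := Real.iSup_nonneg fun k => dist_nonneg
  have hbdd : BddAbove (Set.range fun k => dist (y k) (z k)) := by
    refine ⟨Metric.diam (K ∪ P), ?_⟩
    rintro _ ⟨k, rfl⟩
    exact Metric.dist_le_diam_of_mem hbound (hy k) (hz k)
  -- dist from K to P is at least η
  have hKP : ∀ a ∈ K, ∀ b ∈ P, η ≤ dist a b := by
    intro a ha b hb
    rw [hη]
    exact csInf_le ⟨0, by rintro _ ⟨u, hu, v, hv, rfl⟩; exact dist_nonneg⟩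
      (Set.mem_image2_of_mem ha hb)
  -- mixed case key lemma
  have key : ∀ (hyK : ∀ k, y k ∈ K) (k0 : ℕ) (hk0 : z k0 ∈ P),
      dist (f y) (f fun _ => x) ≤ L * M * S := by
    intro hyK k0 hk0
    have h1 : dist (f y) (f fun _ => x) ≤ L * Metric.diam K := by
      refine le_trans (hlip y (fun _ => x) hyK (fun _ => hx)) ?_
      refine mul_le_mul_of_nonneg_left ?_ hL
      exact Real.iSup_le (fun k => Metric.dist_le_diam_of_mem hK.isBounded (hyK k) hx)
        Metric.diam_nonneg
    have hηS : η ≤ S := le_trans (hKP _ (hyK k0) _ hk0) (le_ciSup hbdd k0)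
    have hdnn : 0 ≤ Metric.diam K := Metric.diam_nonneg
    have h2 : Metric.diam K ≤ M * S := by
      have : Metric.diam K = (Metric.diam K / η) * η := by
        field_simp
      rw [this]
      exact mul_le_mul hM2 hηS (le_of_lt hηpos) (le_trans zero_le_one hM1)
    calc dist (f y) (f fun _ => x) ≤ L * Metric.diam K := h1
      _ ≤ L * (M * S) := mul_le_mul_of_nonneg_left h2 hL
      _ = L * M * S := (mul_assoc _ _ _).symm
  by_cases hyK : ∀ k, y k ∈ K <;> by_cases hzK : ∀ k, z k ∈ K
  · rw [hg y hyK, hg z hzK]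
    refine le_trans (hlip y z hyK hzK) ?_
    exact mul_le_mul_of_nonneg_right (le_mul_of_one_le_right hL hM1) hSnn
  · push_neg at hzK
    obtain ⟨k0, hk0⟩ := hzK
    have hk0P : z k0 ∈ P := (hz k0).resolve_left hk0
    rw [hg y hyK, hg' z (by intro h; exact hk0 (h k0))]
    exact key hyK k0 hk0P
  · push_neg at hyK
    obtain ⟨k0, hk0⟩ := hyK
    have hk0P : y k0 ∈ P := (hy k0).resolve_left hk0
    rw [hg' y (by intro h; exact hk0 (h k0)), hg z hzK]
    rw [dist_comm]
    have hSe : S = ⨆ k, dist (z k) (y k) := by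
      rw [hSdef]; congr 1; ext k; rw [dist_comm]
    have hbdd' : BddAbove (Set.range fun k => dist (z k) (y k)) := by
      refine ⟨Metric.diam (K ∪ P), ?_⟩
      rintro _ ⟨k, rfl⟩
      exact Metric.dist_le_diam_of_mem hbound (hz k) (hy k)
    have h1 : dist (f z) (f fun _ => x) ≤ L * Metric.diam K := by
      refine le_trans (hlip z (fun _ => x) hzK (fun _ => hx)) ?_
      refine mul_le_mul_of_nonneg_left ?_ hL
      exact Real.iSup_le (fun k => Metric.dist_le_diam_of_mem hK.isBounded (hzK k) hx)
        Metric.diam_nonneg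
    have hηS : η ≤ S := by
      rw [hSe]
      exact le_trans (hKP _ (hzK k0) _ hk0P) (le_ciSup hbdd' k0)
    have h2 : Metric.diam K ≤ M * S := by
      have : Metric.diam K = (Metric.diam K / η) * η := by field_simp
      rw [this]
      exact mul_le_mul hM2 hηS (le_of_lt hηpos) (le_trans zero_le_one hM1)
    calc dist (f z) (f fun _ => x) ≤ L * Metric.diam K := h1
      _ ≤ L * (M * S) := mul_le_mul_of_nonneg_left h2 hL
      _ = L * M * S := (mul_assoc _ _ _).symm
  · rw [hg' y hyK, hg' z hzK]
    simp only [dist_self]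
    positivity
end

section
/- Let X be a metric space and S ⊆ X an open set that is dense in its closure S̄ (e.g., S a set of isolated points of X). Then K(S), the set of nonempty compact subsets of S, is open and dense in K(S̄) with respect to the Hausdorff metric. Moreover, if every point of S is isolated in X, then every element of K(S) is finite. -/
open Metric TopologicalSpace Set

/-- If `S` is open (hence dense in its closure `S̄`), then `K(S)` is open and dense
in `K(S̄)` (the hyperspace of nonempty compact subsets with the Hausdorff metric).
Moreover, if every point of `S` is isolated in `X`, every element of `K(S)` is
finite. -/
theorem hyperspace_of_open_dense_in_closure (X : Type*) [MetricSpace X]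
    (S : Set X) (hS : IsOpen S) :
    IsOpen {F : {F : TopologicalSpace.NonemptyCompacts X // (F : Set X) ⊆ closure S} |
        ((F : TopologicalSpace.NonemptyCompacts X) : Set X) ⊆ S} ∧
    Dense {F : {F : TopologicalSpace.NonemptyCompacts X // (F : Set X) ⊆ closure S} |
        ((F : TopologicalSpace.NonemptyCompacts X) : Set X) ⊆ S} ∧
    ((∀ x ∈ S, IsOpen ({x} : Set X)) →
      ∀ F : TopologicalSpace.NonemptyCompacts X, (F : Set X) ⊆ S → (F : Set X).Finite) := by
  refine ⟨?_, ?_, ?_⟩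
  · -- openness
    rw [Metric.isOpen_iff]
    rintro ⟨F, hFc⟩ hFS
    obtain ⟨δ, δpos, hδ⟩ := F.isCompact.exists_thickening_subset_open hS hFS
    refine ⟨δ, δpos, ?_⟩
    rintro ⟨G, hGc⟩ hdist
    rw [mem_ball, Subtype.dist_eq, NonemptyCompacts.dist_eq] at hdist
    intro x hx
    apply hδ
    rw [mem_thickening_iff_infDist_lt F.nonempty]
    calc infDist x (F : Set X) ≤ hausdorffDist (G : Set X) F :=
          infDist_le_hausdorffDist_of_mem hx
            (hausdorffEdist_ne_top_of_nonempty_of_bounded G.nonempty F.nonempty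
              G.isCompact.isBounded F.isCompact.isBounded)
      _ < δ := hdist
  · -- density
    rw [Metric.dense_iff]
    rintro ⟨F, hFc⟩ ε εpos
    -- for each x ∈ F ⊆ closure S pick a nearby point of S
    have hpick : ∀ x : X, x ∈ (F : Set X) → ∃ y ∈ S, dist x y < ε / 2 := by
      intro x hx
      have := hFc hx
      rw [Metric.mem_closure_iff] at this
      obtain ⟨y, hyS, hy⟩ := this (ε / 2) (by linarith)
      exact ⟨y, hyS, hy⟩
    choose! s hsS hsd using hpick
    have hcover : (F : Set X) ⊆ ⋃ x ∈ (F : Set X), ball (s x) (ε / 2) := by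
      intro x hx
      exact mem_biUnion hx (mem_ball.2 (hsd x hx))
    obtain ⟨t, htF, htfin, htcov⟩ :=
      F.isCompact.elim_finite_subcover_image (fun x _ => isOpen_ball) hcover
    -- t is nonempty
    obtain ⟨x₀, hx₀⟩ := F.nonempty
    obtain ⟨x₁, hx₁, _⟩ := mem_iUnion₂.1 (htcov hx₀)
    have htne : (s '' t).Nonempty := ⟨s x₁, mem_image_of_mem _ hx₁⟩
    set G : NonemptyCompacts X :=
      ⟨⟨s '' t, (htfin.image s).isCompact⟩, htne⟩ with hGdef
    have hGS : (G : Set X) ⊆ S := by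
      rintro _ ⟨x, hx, rfl⟩
      exact hsS x (htF hx)
    have hdist : hausdorffDist (G : Set X) (F : Set X) ≤ ε / 2 := by
      apply hausdorffDist_le_of_mem_dist (by linarith)
      · rintro _ ⟨x, hx, rfl⟩
        exact ⟨x, htF hx, by rw [dist_comm]; exact (hsd x (htF hx)).le⟩
      · intro x hx
        obtain ⟨y, hy, hxy⟩ := mem_iUnion₂.1 (htcov hx)
        exact ⟨s y, mem_image_of_mem _ hy, (mem_ball.1 hxy).le⟩
    refine ⟨⟨G, hGS.trans subset_closure⟩, ?_, hGS⟩
    rw [mem_ball, Subtype.dist_eq, NonemptyCompacts.dist_eq]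
    calc hausdorffDist (G : Set X) (F : Set X) ≤ ε / 2 := hdist
      _ < ε := by linarith
  · -- finiteness
    intro hiso F hFS
    have hcov : (F : Set X) ⊆ ⋃ x ∈ (F : Set X), ({x} : Set X) := by
      intro x hx; exact mem_biUnion hx rfl
    obtain ⟨t, htF, htfin, htcov⟩ :=
      F.isCompact.elim_finite_subcover_image (fun x hx => hiso x (hFS hx)) hcov
    apply Finite.subset htfin
    intro x hx
    obtain ⟨y, hy, hxy⟩ := mem_iUnion₂.1 (htcov hx)
    rwa [mem_singleton_iff.1 hxy]
end

section
/- Let X be a countable Polish metric space. Then the set of finite subsets of X is comeager in the hyperspace K(X): a typical compact subset of X is finite. -/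
open Metric Set TopologicalSpace Filter Topology

private lemma aux_open (X : Type*) [MetricSpace X] (x : X) :
    IsOpen {F : NonemptyCompacts X | x ∉ (F : Set X)} := by
  rw [Metric.isOpen_iff]
  intro F hF
  have h0 : infDist x (F : Set X) ≠ 0 := by
    intro h
    exact hF (by
      have : x ∈ closure (F : Set X) :=
        (mem_closure_iff_infDist_zero F.nonempty).2 h
      rwa [F.isCompact.isClosed.closure_eq] at this)
  have hpos : 0 < infDist x (F : Set X) :=
    lt_of_le_of_ne infDist_nonneg (Ne.symm h0)
  refine ⟨_, hpos, fun G hG hxG => ?_⟩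
  have hne : EMetric.hausdorffEdist (G : Set X) (F : Set X) ≠ ⊤ :=
    Metric.hausdorffEdist_ne_top_of_nonempty_of_bounded G.nonempty F.nonempty
      G.isCompact.isBounded F.isCompact.isBounded
  have h1 : infDist x (F : Set X) ≤ hausdorffDist (G : Set X) (F : Set X) :=
    infDist_le_hausdorffDist_of_mem hxG hne
  rw [mem_ball, NonemptyCompacts.dist_eq] at hG
  exact absurd (h1.trans_lt hG) (lt_irrefl _)

private lemma aux_dense (X : Type*) [MetricSpace X] (x : X) (hx : (𝓝[≠] x).NeBot) :
    Dense {F : NonemptyCompacts X | x ∉ (F : Set X)} := by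
  rw [Metric.dense_iff]
  intro F r hr
  by_cases hxF : x ∈ (F : Set X)
  · obtain ⟨y, hyb, hy_ne⟩ : ∃ y, y ∈ ball x (r/4) ∧ y ≠ x := by
      have : ball x (r/4) ∩ {x}ᶜ ∈ 𝓝[≠] x :=
        inter_mem (nhdsWithin_le_nhds (ball_mem_nhds x (by positivity))) self_mem_nhdsWithin
      obtain ⟨y, hy⟩ := hx.nonempty_of_mem this
      exact ⟨y, hy.1, hy.2⟩
    set K : Set X := ((F : Set X) \ ball x (r/4)) ∪ {y} with hK
    have hKc : IsCompact K := (F.isCompact.diff isOpen_ball).union isCompact_singleton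
    have hKne : K.Nonempty := ⟨y, Or.inr rfl⟩
    refine ⟨⟨⟨K, hKc⟩, hKne⟩, ?_, ?_⟩
    · rw [mem_ball, NonemptyCompacts.dist_eq]
      have hyd : dist y x < r/4 := mem_ball.1 hyb
      have hle : hausdorffDist K (F : Set X) ≤ r/2 := by
        apply hausdorffDist_le_of_mem_dist (by positivity)
        · rintro z (⟨hz, -⟩ | rfl)
          · exact ⟨z, hz, by simp only [dist_self]; positivity⟩
          · exact ⟨x, hxF, by linarith⟩
        · intro z hz
          by_cases hzb : z ∈ ball x (r/4)
          · refine ⟨y, Or.inr rfl, ?_⟩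
            have h1 : dist z x < r/4 := mem_ball.1 hzb
            have h2 : dist z y ≤ dist z x + dist x y := dist_triangle z x y
            rw [dist_comm] at hyd
            linarith
          · exact ⟨z, Or.inl ⟨hz, hzb⟩, by simp only [dist_self]; positivity⟩
      calc hausdorffDist K (F : Set X) ≤ r/2 := hle
        _ < r := by linarith
    · show x ∉ K
      rintro (⟨-, hb⟩ | h)
      · exact hb (mem_ball_self (by positivity))
      · exact hy_ne ((mem_singleton_iff.1 h).symm)
  · exact ⟨F, mem_ball_self hr, hxF⟩

/-- In a countable Polish metric space, the typical compact set is finite: the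
finite sets form a comeager (residual) subset of the hyperspace `K(X)` with the
Hausdorff metric. -/
theorem typical_compact_finite_in_countable_polish (X : Type*) [MetricSpace X]
    [CompleteSpace X] [Countable X] :
    {F : TopologicalSpace.NonemptyCompacts X | (F : Set X).Finite} ∈
      residual (TopologicalSpace.NonemptyCompacts X) := by
  have key : ∀ x : X,
      {F : NonemptyCompacts X | x ∈ (F : Set X) ∧ (𝓝[≠] x).NeBot}ᶜ ∈
        residual (NonemptyCompacts X) := by
    intro x
    by_cases hx : (𝓝[≠] x).NeBot
    · refine Filter.mem_of_superset
        (residual_of_dense_open (aux_open X x) (aux_dense X x hx)) ?_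
      intro F hF
      simp only [mem_setOf_eq] at hF
      simp only [mem_compl_iff, mem_setOf_eq, not_and]
      exact fun h _ => hF h
    · refine Filter.mem_of_superset Filter.univ_mem ?_
      intro F _
      simp only [mem_compl_iff, mem_setOf_eq, not_and]
      exact fun _ h => hx h
  have hall : (⋂ x : X, {F : NonemptyCompacts X | x ∈ (F : Set X) ∧ (𝓝[≠] x).NeBot}ᶜ) ∈
      residual (NonemptyCompacts X) := countable_iInter_mem.2 key
  refine Filter.mem_of_superset hall ?_
  intro F hF
  simp only [mem_iInter, mem_compl_iff, mem_setOf_eq, not_and] at hF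
  by_contra hinf
  have hinf' : (F : Set X).Infinite := hinf
  obtain ⟨x, hxF, hacc⟩ :=
    hinf'.exists_accPt_of_subset_isCompact F.isCompact subset_rfl
  exact hF x hxF (Filter.NeBot.mono hacc inf_le_left)
end

section
/- Let X be a metric space, K ⊆ X compact, and let A, B be disjoint compact sets with K = A ∪ B and δ := dist(A,B) > 0. Then for every r < δ/2 and every F ∈ K(X) with Hausdorff distance H(F, K) < r, the sets C := F ∩ B(A,r) and D := F ∩ B(B,r) are disjoint, nonempty, compact, F = C ∪ D, H(A,C) < r, and H(B,D) < r. -/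
/-- Splitting lemma: if `K = A ∪ B` with `A, B` disjoint nonempty compact sets at
distance `δ > 0`, then for `0 < r < δ/2` every nonempty compact `F` with
`H(F,K) < r` splits as `F = C ∪ D` with `C := F ∩ B(A,r)`, `D := F ∩ B(B,r)`
disjoint, nonempty, compact, `H(A,C) < r` and `H(B,D) < r`. -/
theorem hyperspace_splitting_lemma (X : Type*) [MetricSpace X]
    (A B K : Set X) (hA : IsCompact A) (hB : IsCompact B)
    (hAne : A.Nonempty) (hBne : B.Nonempty) (hdisj : Disjoint A B)
    (hK : K = A ∪ B) (δ : ℝ) (hδ : δ = SetDist A B) (hδpos : 0 < δ)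
    (r : ℝ) (hr0 : 0 < r) (hr : r < δ / 2)
    (F : Set X) (hFc : IsCompact F) (hFne : F.Nonempty)
    (hH : Metric.hausdorffDist F K < r) :
    Disjoint (F ∩ Metric.thickening r A) (F ∩ Metric.thickening r B) ∧
    (F ∩ Metric.thickening r A).Nonempty ∧ (F ∩ Metric.thickening r B).Nonempty ∧
    IsCompact (F ∩ Metric.thickening r A) ∧ IsCompact (F ∩ Metric.thickening r B) ∧
    F = (F ∩ Metric.thickening r A) ∪ (F ∩ Metric.thickening r B) ∧
    Metric.hausdorffDist A (F ∩ Metric.thickening r A) < r ∧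
    Metric.hausdorffDist B (F ∩ Metric.thickening r B) < r := by
  have hKc : IsCompact K := by rw [hK]; exact hA.union hB
  have hKne : K.Nonempty := by rw [hK]; exact hAne.mono Set.subset_union_left
  have hfin : EMetric.hausdorffEdist F K ≠ ⊤ :=
    Metric.hausdorffEdist_ne_top_of_nonempty_of_bounded hFne hKne hFc.isBounded hKc.isBounded
  have hδle : ∀ a ∈ A, ∀ b ∈ B, δ ≤ dist a b := by
    intro a ha b hb
    rw [hδ]
    refine csInf_le ⟨0, ?_⟩ (Set.mem_image2_of_mem ha hb)
    rintro x ⟨a', -, b', -, rfl⟩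
    exact dist_nonneg
  obtain ⟨r', hH', hr'r⟩ := exists_between hH
  have hr'0 : 0 ≤ r' := le_of_lt (lt_of_le_of_lt Metric.hausdorffDist_nonneg hH')
  -- points of C are r'-close to A
  have hclassA : ∀ f ∈ F ∩ Metric.thickening r A, ∃ a ∈ A, dist f a ≤ r' := by
    rintro f ⟨hfF, hfA⟩
    obtain ⟨k, hk, hdk⟩ := Metric.exists_dist_lt_of_hausdorffDist_lt hfF hH' hfin
    rw [hK] at hk
    rcases hk with hk | hk
    · exact ⟨k, hk, hdk.le⟩
    · exfalso
      obtain ⟨a, ha, hda⟩ := Metric.mem_thickening_iff.mp hfA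
      have h1 : δ ≤ dist a k := hδle a ha k hk
      have h2 : dist a k ≤ dist a f + dist f k := dist_triangle _ _ _
      rw [dist_comm a f] at h2
      linarith
  have hclassB : ∀ f ∈ F ∩ Metric.thickening r B, ∃ b ∈ B, dist f b ≤ r' := by
    rintro f ⟨hfF, hfB⟩
    obtain ⟨k, hk, hdk⟩ := Metric.exists_dist_lt_of_hausdorffDist_lt hfF hH' hfin
    rw [hK] at hk
    rcases hk with hk | hk
    · exfalso
      obtain ⟨b, hb, hdb⟩ := Metric.mem_thickening_iff.mp hfB
      have h1 : δ ≤ dist k b := hδle k hk b hb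
      have h2 : dist k b ≤ dist k f + dist f b := dist_triangle _ _ _
      rw [dist_comm k f] at h2
      linarith
    · exact ⟨k, hk, hdk.le⟩
  -- every a ∈ A has a point of C at distance ≤ r'
  have hdirA : ∀ a ∈ A, ∃ c ∈ F ∩ Metric.thickening r A, dist a c ≤ r' := by
    intro a ha
    have haK : a ∈ K := by rw [hK]; exact Or.inl ha
    obtain ⟨f, hfF, hdf⟩ := Metric.exists_dist_lt_of_hausdorffDist_lt' haK hH' hfin
    refine ⟨f, ⟨hfF, Metric.mem_thickening_iff.mpr ⟨a, ha, lt_trans hdf hr'r⟩⟩, ?_⟩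
    rw [dist_comm]; exact hdf.le
  have hdirB : ∀ b ∈ B, ∃ d ∈ F ∩ Metric.thickening r B, dist b d ≤ r' := by
    intro b hb
    have hbK : b ∈ K := by rw [hK]; exact Or.inr hb
    obtain ⟨f, hfF, hdf⟩ := Metric.exists_dist_lt_of_hausdorffDist_lt' hbK hH' hfin
    refine ⟨f, ⟨hfF, Metric.mem_thickening_iff.mpr ⟨b, hb, lt_trans hdf hr'r⟩⟩, ?_⟩
    rw [dist_comm]; exact hdf.le
  -- disjointness of thickenings
  have hdisjT : Disjoint (Metric.thickening r A) (Metric.thickening r B) := by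
    rw [Set.disjoint_left]
    intro x hxA hxB
    obtain ⟨a, ha, hda⟩ := Metric.mem_thickening_iff.mp hxA
    obtain ⟨b, hb, hdb⟩ := Metric.mem_thickening_iff.mp hxB
    have h1 : δ ≤ dist a b := hδle a ha b hb
    have h2 : dist a b ≤ dist a x + dist x b := dist_triangle _ _ _
    rw [dist_comm a x] at h2
    linarith
  have hdisjCD : Disjoint (F ∩ Metric.thickening r A) (F ∩ Metric.thickening r B) :=
    hdisjT.mono Set.inter_subset_right Set.inter_subset_right
  -- F splits
  have hsplit : F = (F ∩ Metric.thickening r A) ∪ (F ∩ Metric.thickening r B) := by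
    apply Set.Subset.antisymm
    · intro f hfF
      obtain ⟨k, hk, hdk⟩ := Metric.exists_dist_lt_of_hausdorffDist_lt hfF hH' hfin
      rw [hK] at hk
      rcases hk with hk | hk
      · exact Or.inl ⟨hfF, Metric.mem_thickening_iff.mpr ⟨k, hk, lt_trans hdk hr'r⟩⟩
      · exact Or.inr ⟨hfF, Metric.mem_thickening_iff.mpr ⟨k, hk, lt_trans hdk hr'r⟩⟩
    · exact Set.union_subset Set.inter_subset_left Set.inter_subset_left
  -- compactness
  have hCeq : F ∩ Metric.thickening r A = F \ Metric.thickening r B := by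
    apply Set.Subset.antisymm
    · rintro x ⟨hxF, hxA⟩
      exact ⟨hxF, fun hxB => Set.disjoint_left.mp hdisjT hxA hxB⟩
    · rintro x ⟨hxF, hxB⟩
      have := hsplit ▸ hxF
      rcases this with h | h
      · exact h
      · exact absurd h.2 hxB
  have hDeq : F ∩ Metric.thickening r B = F \ Metric.thickening r A := by
    apply Set.Subset.antisymm
    · rintro x ⟨hxF, hxB⟩
      exact ⟨hxF, fun hxA => Set.disjoint_left.mp hdisjT hxA hxB⟩
    · rintro x ⟨hxF, hxA⟩
      have := hsplit ▸ hxF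
      rcases this with h | h
      · exact absurd h.2 hxA
      · exact h
  have hCc : IsCompact (F ∩ Metric.thickening r A) := by
    rw [hCeq]; exact hFc.diff Metric.isOpen_thickening
  have hDc : IsCompact (F ∩ Metric.thickening r B) := by
    rw [hDeq]; exact hFc.diff Metric.isOpen_thickening
  -- nonemptiness
  obtain ⟨a₀, ha₀⟩ := hAne
  obtain ⟨c₀, hc₀, -⟩ := hdirA a₀ ha₀
  obtain ⟨b₀, hb₀⟩ := hBne
  obtain ⟨d₀, hd₀, -⟩ := hdirB b₀ hb₀
  -- Hausdorff distances
  have hHA : Metric.hausdorffDist A (F ∩ Metric.thickening r A) < r := by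
    refine lt_of_le_of_lt (Metric.hausdorffDist_le_of_mem_dist hr'0 hdirA ?_) hr'r
    intro c hc
    obtain ⟨a, ha, hda⟩ := hclassA c hc
    exact ⟨a, ha, hda⟩
  have hHB : Metric.hausdorffDist B (F ∩ Metric.thickening r B) < r := by
    refine lt_of_le_of_lt (Metric.hausdorffDist_le_of_mem_dist hr'0 hdirB ?_) hr'r
    intro d hd
    obtain ⟨b, hb, hdb⟩ := hclassB d hd
    exact ⟨b, hb, hdb⟩
  exact ⟨hdisjCD, ⟨c₀, hc₀⟩, ⟨d₀, hd₀⟩, hCc, hDc, hsplit, hHA, hHB⟩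
end
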